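/- (Exact sparse implementation of the finite-volume scheme.) Let L ≥ 1, m ≥ 2, d ≥ 2, Δt > 0 and α > 0. There exists a weight assignment θ for the (L,m,d) message-passing network with all biases equal to zero and with exactly ‖θ‖_0 = 2m(L+1)+4 nonzero parameters, such that for every graph — i.e. every finite collection of cells P with volumes V_P > 0, sources S_P ∈ ℝ, temperatures T_P ∈ ℝ, finite neighbour sets N(P), face areas A_{PN} > 0 and centroid distances δ_{PN} > 0 — and every node P, the network output equals the first-order finite-volume update: M_θ(G)_P = F(G)_P. -/

import Mathlib

/-- Entrywise ReLU on a real vector. -/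
def relu {d : ℕ} (v : Fin d → ℝ) : Fin d → ℝ := fun i => max (v i) 0

/-- Number of nonzero entries of a real matrix. -/
noncomputable def matNnz {a b : ℕ} (M : Matrix (Fin a) (Fin b) ℝ) : ℕ :=
  (Finset.univ.filter fun p : Fin a × Fin b => M p.1 p.2 ≠ 0).card

/-- Number of nonzero entries of a real vector. -/
noncomputable def vecNnz {a : ℕ} (v : Fin a → ℝ) : ℕ :=
  (Finset.univ.filter fun i : Fin a => v i ≠ 0).card

/-- An `m`-layer MLP of width `d`, input dimension `k`, scalar output:
`x ↦ Wₘ·σ(…σ(W₂·σ(W₁·x + c₁) + c₂)…) + cₘ`, with `W₁ ∈ ℝ^{d×k}`,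
`W₂,…,W_{m−1} ∈ ℝ^{d×d}`, `Wₘ ∈ ℝ^{1×d}`, bias vectors `c₁,…,c_{m−1} ∈ ℝ^d`
and scalar bias `cₘ`; ReLU after every sublayer except the last. -/
structure MLP (k m d : ℕ) where
  first : Matrix (Fin d) (Fin k) ℝ
  biasFirst : Fin d → ℝ
  mid : Fin (m - 2) → Matrix (Fin d) (Fin d) ℝ
  biasMid : Fin (m - 2) → Fin d → ℝ
  last : Matrix (Fin 1) (Fin d) ℝ
  biasLast : ℝ

/-- Evaluation of an MLP. -/
noncomputable def MLP.eval {k m d : ℕ} (f : MLP k m d) (x : Fin k → ℝ) : ℝ :=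
  (f.last.mulVec
    ((List.finRange (m - 2)).foldl
      (fun v i => relu ((f.mid i).mulVec v + f.biasMid i))
      (relu (f.first.mulVec x + f.biasFirst)))) 0 + f.biasLast

/-- Number of nonzero parameters (weights and biases) of an MLP. -/
noncomputable def MLP.nnz {k m d : ℕ} (f : MLP k m d) : ℕ :=
  matNnz f.first + vecNnz f.biasFirst +
    (∑ i, (matNnz (f.mid i) + vecNnz (f.biasMid i))) +
    matNnz f.last + (if f.biasLast ≠ 0 then 1 else 0)

/-- All biases of an MLP vanish. -/
def MLP.AllBiasesZero {k m d : ℕ} (f : MLP k m d) : Prop :=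
  f.biasFirst = 0 ∧ (∀ i, f.biasMid i = 0) ∧ f.biasLast = 0

/-- Weights of an `(L,m,d)` message-passing network: for each layer an aggregation
MLP (input dimension 1) and an update MLP (input dimension 3). -/
structure MPSWeights (L m d : ℕ) where
  agg : Fin L → MLP 1 m d
  up : Fin L → MLP 3 m d

/-- Total number of nonzero parameters `‖θ‖₀` of a message-passing network. -/
noncomputable def MPSWeights.nnz {L m d : ℕ} (θ : MPSWeights L m d) : ℕ :=
  ∑ l, ((θ.agg l).nnz + (θ.up l).nnz)

/-- A finite-volume graph: cells with volumes, sources, temperatures, neighbour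
sets, face areas and centroid distances. -/
structure HeatGraph (ι : Type) where
  vol : ι → ℝ
  S : ι → ℝ
  T : ι → ℝ
  nbr : ι → Finset ι
  faceA : ι → ι → ℝ
  dist : ι → ι → ℝ

/-- Geometric validity: positive volumes, face areas and centroid distances. -/
def HeatGraph.Valid {ι : Type} (G : HeatGraph ι) : Prop :=
  (∀ P, 0 < G.vol P) ∧ ∀ P, ∀ j ∈ G.nbr P, 0 < G.faceA P j ∧ 0 < G.dist P j

/-- First-order finite-volume update at node `P` of a graph:
`F_P = T_P + (Δt/V_P)·Σ_{j∈N(P)} α·(A_{Pj}/δ_{Pj})·(T_j − T_P) + Δt·S_P`. -/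
noncomputable def fvUpdate {ι : Type} (Δt α : ℝ) (G : HeatGraph ι) (P : ι) : ℝ :=
  G.T P + (Δt / G.vol P) * ∑ j ∈ G.nbr P, α * (G.faceA P j / G.dist P j) * (G.T j - G.T P)
    + Δt * G.S P

/-- Node states of the message-passing network: `h_P⁰ = T_P` and
`h_P^l = u_l([h_P^{l−1}, (Δt/V_P)·Σ_{N∈N(P)} g_l(α·(A_{PN}/δ_{PN})·(h_N^{l−1} − h_P^{l−1})), Δt·S_P])`. -/
noncomputable def nodeState {ι : Type} {L m d : ℕ} (θ : MPSWeights L m d) (Δt α : ℝ)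
    (G : HeatGraph ι) : ℕ → ι → ℝ
  | 0, P => G.T P
  | l + 1, P =>
    if h : l < L then
      (θ.up ⟨l, h⟩).eval
        ![nodeState θ Δt α G l P,
          (Δt / G.vol P) *
            ∑ N ∈ G.nbr P,
              (θ.agg ⟨l, h⟩).eval fun _ =>
                α * (G.faceA P N / G.dist P N) *
                  (nodeState θ Δt α G l N - nodeState θ Δt α G l P),
          Δt * G.S P]
    else nodeState θ Δt α G l P

/-- Output of the `(L,m,d)` message-passing network at node `P`: `M_θ(G)_P = h_P^L`. -/
noncomputable def mpsOutput {ι : Type} {L m d : ℕ} (θ : MPSWeights L m d) (Δt α : ℝ)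
    (G : HeatGraph ι) (P : ι) : ℝ :=
  nodeState θ Δt α G L P


namespace FVAux

noncomputable def pairVec (d : ℕ) (x : ℝ) : Fin d → ℝ :=
  fun i => if i.val = 0 then max x 0 else if i.val = 1 then max (-x) 0 else 0

def midMat (d : ℕ) : Matrix (Fin d) (Fin d) ℝ :=
  fun i j => if i = j ∧ i.val < 2 then 1 else 0

def lastMat (d : ℕ) : Matrix (Fin 1) (Fin d) ℝ :=
  fun _ j => if j.val = 0 then 1 else if j.val = 1 then -1 else 0

lemma pairVec_nonneg (d : ℕ) (x : ℝ) (i : Fin d) : 0 ≤ pairVec d x i := by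
  unfold pairVec
  split_ifs <;> simp [le_max_right]

lemma mid_step (d : ℕ) (x : ℝ) :
    relu ((midMat d).mulVec (pairVec d x)) = pairVec d x := by
  funext i
  have h : (midMat d).mulVec (pairVec d x) i = pairVec d x i := by
    unfold Matrix.mulVec dotProduct midMat
    rw [Finset.sum_eq_single i]
    · by_cases hi : i.val < 2
      · simp [hi]
      · simp [hi]
        unfold pairVec
        rw [if_neg (by omega), if_neg (by omega)]
    · intro j _ hj
      simp [Ne.symm hj]
    · simp
  unfold relu
  rw [h]
  exact max_eq_left (pairVec_nonneg d x i)

lemma foldl_const {α β : Type*} (f : β → α → β) (b : β) (h : ∀ a, f b a = b)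
    (l : List α) : l.foldl f b = b := by
  induction l with
  | nil => rfl
  | cons a t ih => simp [List.foldl_cons, h a, ih]

lemma last_eval {d : ℕ} (hd : 2 ≤ d) (x : ℝ) :
    (lastMat d).mulVec (pairVec d x) 0 = x := by
  unfold Matrix.mulVec dotProduct lastMat pairVec
  have key : ∀ j : Fin d,
      (if j.val = 0 then (1:ℝ) else if j.val = 1 then -1 else 0) *
        (if j.val = 0 then max x 0 else if j.val = 1 then max (-x) 0 else 0)
      = (if j = (⟨0, by omega⟩ : Fin d) then max x 0 else 0) +
        (if j = (⟨1, by omega⟩ : Fin d) then -max (-x) 0 else 0) := by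
    intro j
    by_cases h0 : j.val = 0
    · have : j = (⟨0, by omega⟩ : Fin d) := Fin.ext h0
      simp [h0, this, Fin.ext_iff]
    · by_cases h1 : j.val = 1
      · have : j = (⟨1, by omega⟩ : Fin d) := Fin.ext h1
        simp [h0, h1, this, Fin.ext_iff]
      · rw [if_neg h0, if_neg h1, if_neg h0, if_neg h1,
          if_neg (by simp [Fin.ext_iff]; omega), if_neg (by simp [Fin.ext_iff]; omega)]
        ring
  rw [Finset.sum_congr rfl (fun j _ => key j), Finset.sum_add_distrib,
    Finset.sum_ite_eq' _ _ (fun _ => max x 0), Finset.sum_ite_eq' _ _ (fun _ => -max (-x) 0)]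
  simp only [Finset.mem_univ, if_true]
  rcases le_total 0 x with h | h
  · rw [max_eq_left h, max_eq_right (by linarith)]; ring
  · rw [max_eq_right h, max_eq_left (by linarith)]; ring

end FVAux

section MLPs
open FVAux

noncomputable def idAgg (m d : ℕ) : MLP 1 m d :=
  ⟨fun i _ => if i.val = 0 then 1 else if i.val = 1 then -1 else 0, 0,
   fun _ => midMat d, fun _ => 0, lastMat d, 0⟩

noncomputable def sumUp (m d : ℕ) : MLP 3 m d :=
  ⟨fun i _ => if i.val = 0 then 1 else if i.val = 1 then -1 else 0, 0,
   fun _ => midMat d, fun _ => 0, lastMat d, 0⟩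

noncomputable def idUp (m d : ℕ) : MLP 3 m d :=
  ⟨fun i j => if j.val = 0 ∧ i.val = 0 then 1 else if j.val = 0 ∧ i.val = 1 then -1 else 0, 0,
   fun _ => midMat d, fun _ => 0, lastMat d, 0⟩

def zeroMLP (m d : ℕ) : MLP 1 m d := ⟨0, 0, fun _ => 0, fun _ => 0, 0, 0⟩

lemma relu_c_mul (d : ℕ) (c : ℝ) :
    relu (fun i : Fin d =>
      (if i.val = 0 then (1:ℝ) else if i.val = 1 then -1 else 0) * c) = pairVec d c := by
  funext i
  unfold relu pairVec
  by_cases h0 : i.val = 0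
  · simp [h0]
  · by_cases h1 : i.val = 1
    · simp [h0, h1]
    · simp [h0, h1]

/-- Generic eval lemma for our MLPs built from midMat/lastMat. -/
lemma eval_pair {k m d : ℕ} (hd : 2 ≤ d) (f : MLP k m d)
    (hmid : ∀ i, f.mid i = midMat d) (hb1 : f.biasFirst = 0)
    (hb2 : ∀ i, f.biasMid i = 0) (hlast : f.last = lastMat d) (hb3 : f.biasLast = 0)
    (x : Fin k → ℝ) (c : ℝ) (hfirst : relu (f.first.mulVec x) = pairVec d c) :
    f.eval x = c := by
  unfold MLP.eval
  rw [hb1, hb3, add_zero, add_zero, hfirst]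
  rw [foldl_const _ _ (fun i => by rw [hmid i, hb2 i, add_zero, mid_step]), hlast]
  exact last_eval hd c

lemma idAgg_eval {m d : ℕ} (hd : 2 ≤ d) (x : Fin 1 → ℝ) :
    (idAgg m d).eval x = x 0 := by
  apply eval_pair hd _ (fun _ => rfl) rfl (fun _ => rfl) rfl rfl
  have : (idAgg m d).first.mulVec x = fun i : Fin d =>
      (if i.val = 0 then (1:ℝ) else if i.val = 1 then -1 else 0) * x 0 := by
    funext i
    unfold Matrix.mulVec dotProduct idAgg
    simp
  rw [this, relu_c_mul]

lemma sumUp_eval {m d : ℕ} (hd : 2 ≤ d) (x : Fin 3 → ℝ) :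
    (sumUp m d).eval x = x 0 + x 1 + x 2 := by
  apply eval_pair hd _ (fun _ => rfl) rfl (fun _ => rfl) rfl rfl
  have : (sumUp m d).first.mulVec x = fun i : Fin d =>
      (if i.val = 0 then (1:ℝ) else if i.val = 1 then -1 else 0) * (x 0 + x 1 + x 2) := by
    funext i
    unfold Matrix.mulVec dotProduct sumUp
    rw [Fin.sum_univ_three]
    ring
  rw [this, relu_c_mul]

lemma idUp_eval {m d : ℕ} (hd : 2 ≤ d) (x : Fin 3 → ℝ) :
    (idUp m d).eval x = x 0 := by
  apply eval_pair hd _ (fun _ => rfl) rfl (fun _ => rfl) rfl rfl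
  have : (idUp m d).first.mulVec x = fun i : Fin d =>
      (if i.val = 0 then (1:ℝ) else if i.val = 1 then -1 else 0) * x 0 := by
    funext i
    unfold Matrix.mulVec dotProduct idUp
    rw [Fin.sum_univ_three]
    by_cases h0 : i.val = 0
    · simp [h0]
    · by_cases h1 : i.val = 1
      · simp [h0, h1]
      · simp [h0, h1]
  rw [this, relu_c_mul]

lemma zeroMLP_eval {m d : ℕ} (x : Fin 1 → ℝ) : (zeroMLP m d).eval x = 0 := by
  unfold MLP.eval zeroMLP
  simp [Matrix.zero_mulVec]

end MLPs

section Nnz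
open FVAux

lemma vecNnz_zero {a : ℕ} : vecNnz (0 : Fin a → ℝ) = 0 := by simp [vecNnz]

lemma matNnz_zero {a b : ℕ} : matNnz (0 : Matrix (Fin a) (Fin b) ℝ) = 0 := by simp [matNnz]

lemma row2_card {d : ℕ} (hd : 2 ≤ d) :
    (Finset.univ.filter fun i : Fin d => i.val < 2).card = 2 := by
  have h : (Finset.univ.filter fun i : Fin d => i.val < 2)
      = {(⟨0, by omega⟩ : Fin d), ⟨1, by omega⟩} := by
    ext i
    simp [Fin.ext_iff]
    omega
  rw [h, Finset.card_insert_of_notMem (by simp [Fin.ext_iff]), Finset.card_singleton]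

lemma matNnz_first_pm (k : ℕ) {d : ℕ} (hd : 2 ≤ d) :
    matNnz (fun i _ => if i.val = 0 then (1:ℝ) else if i.val = 1 then -1 else 0 :
      Matrix (Fin d) (Fin k) ℝ) = 2 * k := by
  unfold matNnz
  have h : (Finset.univ.filter fun p : Fin d × Fin k =>
      (if p.1.val = 0 then (1:ℝ) else if p.1.val = 1 then -1 else 0) ≠ 0)
      = (Finset.univ.filter fun i : Fin d => i.val < 2) ×ˢ Finset.univ := by
    ext p
    simp [Finset.mem_product]
    split_ifs <;> simp <;> omega
  rw [h, Finset.card_product, row2_card hd]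
  simp

lemma matNnz_mid {d : ℕ} (hd : 2 ≤ d) : matNnz (midMat d) = 2 := by
  unfold matNnz midMat
  have h : (Finset.univ.filter fun p : Fin d × Fin d =>
      (if p.1 = p.2 ∧ p.1.val < 2 then (1:ℝ) else 0) ≠ 0)
      = {((⟨0, by omega⟩ : Fin d), (⟨0, by omega⟩ : Fin d)),
         ((⟨1, by omega⟩ : Fin d), (⟨1, by omega⟩ : Fin d))} := by
    ext ⟨i, j⟩
    simp [Prod.ext_iff, Fin.ext_iff]
    omega
  rw [h, Finset.card_insert_of_notMem (by simp [Prod.ext_iff, Fin.ext_iff]),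
    Finset.card_singleton]

lemma matNnz_last {d : ℕ} (hd : 2 ≤ d) : matNnz (lastMat d) = 2 := by
  unfold matNnz lastMat
  have h : (Finset.univ.filter fun p : Fin 1 × Fin d =>
      (if p.2.val = 0 then (1:ℝ) else if p.2.val = 1 then -1 else 0) ≠ 0)
      = {((0 : Fin 1), (⟨0, by omega⟩ : Fin d)), ((0 : Fin 1), (⟨1, by omega⟩ : Fin d))} := by
    ext ⟨i, j⟩
    simp [Prod.ext_iff, Fin.ext_iff]
    split_ifs <;> simp <;> omega
  rw [h, Finset.card_insert_of_notMem (by simp [Prod.ext_iff, Fin.ext_iff]),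
    Finset.card_singleton]

lemma matNnz_idUp_first {m d : ℕ} (hd : 2 ≤ d) : matNnz (idUp m d).first = 2 := by
  unfold matNnz idUp
  have h : (Finset.univ.filter fun p : Fin d × Fin 3 =>
      (if p.2.val = 0 ∧ p.1.val = 0 then (1:ℝ)
        else if p.2.val = 0 ∧ p.1.val = 1 then -1 else 0) ≠ 0)
      = {((⟨0, by omega⟩ : Fin d), (0 : Fin 3)), ((⟨1, by omega⟩ : Fin d), (0 : Fin 3))} := by
    ext ⟨i, j⟩
    simp [Prod.ext_iff, Fin.ext_iff, -Fin.val_eq_zero_iff]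
    split_ifs <;> simp <;> omega
  rw [h, Finset.card_insert_of_notMem (by simp [Prod.ext_iff, Fin.ext_iff]),
    Finset.card_singleton]

lemma idAgg_nnz {m d : ℕ} (hd : 2 ≤ d) : (idAgg m d).nnz = 2 * (m - 2) + 4 := by
  unfold MLP.nnz
  have h1 : matNnz (idAgg m d).first = 2 := by
    have := matNnz_first_pm 1 (d := d) hd
    simpa [idAgg] using this
  rw [h1]
  simp only [idAgg, vecNnz_zero, matNnz_mid hd, matNnz_last hd]
  simp [Finset.sum_const, Finset.card_univ, mul_comm]
  omega

lemma sumUp_nnz {m d : ℕ} (hd : 2 ≤ d) : (sumUp m d).nnz = 2 * (m - 2) + 8 := by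
  unfold MLP.nnz
  have h1 : matNnz (sumUp m d).first = 6 := by
    have := matNnz_first_pm 3 (d := d) hd
    simpa [sumUp] using this
  rw [h1]
  simp only [sumUp, vecNnz_zero, matNnz_mid hd, matNnz_last hd]
  simp [Finset.sum_const, Finset.card_univ, mul_comm]
  omega

lemma idUp_nnz {m d : ℕ} (hd : 2 ≤ d) : (idUp m d).nnz = 2 * (m - 2) + 4 := by
  unfold MLP.nnz
  rw [matNnz_idUp_first hd]
  simp only [idUp, vecNnz_zero, matNnz_mid hd, matNnz_last hd]
  simp [Finset.sum_const, Finset.card_univ, mul_comm]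
  omega

lemma zeroMLP_nnz {m d : ℕ} : (zeroMLP m d).nnz = 0 := by
  unfold MLP.nnz zeroMLP
  simp [vecNnz_zero, matNnz_zero]

end Nnz

/-- **Exact sparse implementation of the finite-volume scheme.**
For `L ≥ 1`, `m ≥ 2`, `d ≥ 2`, `Δt > 0`, `α > 0`, there is a weight assignment `θ`
with all biases zero and exactly `‖θ‖₀ = 2m(L+1)+4` nonzero parameters such that on
every (geometrically valid) graph and every node, the network output equals the
first-order finite-volume update. -/
theorem exists_sparse_exact_fv_implementation (L m d : ℕ) (hL : 1 ≤ L) (hm : 2 ≤ m)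
    (hd : 2 ≤ d) (Δt α : ℝ) (hΔt : 0 < Δt) (hα : 0 < α) :
    ∃ θ : MPSWeights L m d,
      (∀ l, (θ.agg l).AllBiasesZero ∧ (θ.up l).AllBiasesZero) ∧
      θ.nnz = 2 * m * (L + 1) + 4 ∧
      ∀ (ι : Type) (G : HeatGraph ι), G.Valid →
        ∀ P : ι, mpsOutput θ Δt α G P = fvUpdate Δt α G P := by
  classical
  refine ⟨⟨fun l => if l.val = 0 then idAgg m d else zeroMLP m d,
           fun l => if l.val = 0 then sumUp m d else idUp m d⟩, ?_, ?_, ?_⟩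
  · intro l
    constructor <;> by_cases h : l.val = 0 <;>
      simp [h, idAgg, zeroMLP, sumUp, idUp, MLP.AllBiasesZero]
  · unfold MPSWeights.nnz
    have hL0 : ((⟨0, by omega⟩ : Fin L)) ∈ (Finset.univ : Finset (Fin L)) := Finset.mem_univ _
    rw [← Finset.add_sum_erase _ _ hL0]
    have hterm : ∀ l ∈ Finset.univ.erase (⟨0, by omega⟩ : Fin L),
        ((if l.val = 0 then idAgg m d else zeroMLP m d).nnz
          + (if l.val = 0 then sumUp m d else idUp m d).nnz) = 2 * (m - 2) + 4 := by
      intro l hl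
      have : l.val ≠ 0 := by
        intro hv
        exact (Finset.mem_erase.mp hl).1 (Fin.ext hv)
      rw [if_neg this, if_neg this, zeroMLP_nnz, idUp_nnz hd]
      omega
    rw [Finset.sum_congr rfl hterm, Finset.sum_const, Finset.card_erase_of_mem hL0,
      Finset.card_univ, Fintype.card_fin]
    simp only [if_true, idAgg_nnz hd, sumUp_nnz hd]
    obtain ⟨m', rfl⟩ : ∃ m', m = m' + 2 := ⟨m - 2, by omega⟩
    obtain ⟨L', rfl⟩ : ∃ L', L = L' + 1 := ⟨L - 1, by omega⟩
    simp only [Nat.add_sub_cancel, smul_eq_mul]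
    ring
  · intro ι G hG P
    set θ : MPSWeights L m d :=
      ⟨fun l => if l.val = 0 then idAgg m d else zeroMLP m d,
       fun l => if l.val = 0 then sumUp m d else idUp m d⟩ with hθ
    have key : ∀ l, l < L → ∀ Q : ι, nodeState θ Δt α G (l + 1) Q = fvUpdate Δt α G Q := by
      intro l
      induction l with
      | zero =>
        intro h Q
        rw [nodeState, dif_pos h]
        have hup : θ.up ⟨0, h⟩ = sumUp m d := by simp [hθ]
        have hagg : θ.agg ⟨0, h⟩ = idAgg m d := by simp [hθ]
        rw [hup, hagg, sumUp_eval hd]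
        simp only [Matrix.cons_val_zero, Matrix.cons_val_one, Matrix.head_cons,
          Matrix.cons_val_two, Matrix.tail_cons]
        have h0 : ∀ R : ι, nodeState θ Δt α G 0 R = G.T R := fun R => by rw [nodeState]
        simp only [h0]
        have hsum : (∑ N ∈ G.nbr Q, (idAgg m d).eval fun _ =>
              α * (G.faceA Q N / G.dist Q N) * (G.T N - G.T Q))
            = ∑ j ∈ G.nbr Q, α * (G.faceA Q j / G.dist Q j) * (G.T j - G.T Q) :=
          Finset.sum_congr rfl (fun N _ => idAgg_eval hd _)
        rw [hsum]
        unfold fvUpdate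
        rfl
      | succ l ih =>
        intro h Q
        rw [nodeState, dif_pos h]
        have hne : ((⟨l + 1, h⟩ : Fin L)).val ≠ 0 := by simp
        have hup : θ.up ⟨l + 1, h⟩ = idUp m d := by simp [hθ, hne]
        rw [hup, idUp_eval hd]
        simp only [Matrix.cons_val_zero]
        exact ih (by omega) Q
    obtain ⟨L', rfl⟩ : ∃ L', L = L' + 1 := ⟨L - 1, by omega⟩
    exact key L' (by omega) P
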